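/- Define the symmetric element: for β ∈ G with index j = j(β) (the smallest j ∈ ℤ* with β(O) ∈ D_j), set β₋ = ξ^{−2j−1}β if j > 0 and β₋ = ξ^{−2j+1}β if j < 0. Then: (1) β₋(O) lies in D_{−j−2} if j > 0 and in D_{−j+2} if j < 0, so β and β₋ have opposite signs; (2) the map β ↦ β₋ is injective on the set of elements of a fixed sign. -/
import Mathlib


open Metric Set
open scoped Classical

/-- Four-point condition for δ-hyperbolicity. -/
def FourPointHyp (X : Type*) [MetricSpace X] (δ : ℝ) : Prop :=
  ∀ x y z w : X,
    dist x y + dist z w ≤ max (dist x z + dist y w) (dist y z + dist x w) + 2 * δ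

/-- `s` is a geodesic segment from `a` to `b`. -/
def IsGeodSegment {X : Type*} [MetricSpace X] (a b : X) (s : Set X) : Prop :=
  ∃ f : ℝ → X, f 0 = a ∧ f (dist a b) = b ∧
    (∀ u ∈ Icc (0:ℝ) (dist a b), ∀ v ∈ Icc (0:ℝ) (dist a b),
      dist (f u) (f v) = |u - v|) ∧
    s = f '' Icc (0:ℝ) (dist a b)

/-- `X` is a geodesic space. -/
def IsGeodesicSpace (X : Type*) [MetricSpace X] : Prop :=
  ∀ a b : X, ∃ s : Set X, IsGeodSegment a b s

/-- `τ : ℝ → X` is a geodesic line. -/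
def IsGeodLine {X : Type*} [MetricSpace X] (τ : ℝ → X) : Prop :=
  ∀ u v : ℝ, dist (τ u) (τ v) = |u - v|

/-- The action of `G` on `X` is by isometries. -/
def IsomAction (G X : Type*) [Group G] [MetricSpace X] [MulAction G X] : Prop :=
  ∀ (γ : G) (x y : X), dist (γ • x) (γ • y) = dist x y

/-- A group element `ξ` is hyperbolic: `n ↦ ξⁿ(x)` is a quasi-isometric embedding
of `ℤ` into `X`. -/
def IsHypElem {G : Type*} (X : Type*) [Group G] [MetricSpace X] [MulAction G X]
    (ξ : G) : Prop :=
  ∃ x : X, ∃ A : ℝ, 0 < A ∧ ∃ B : ℝ, ∀ m n : ℤ,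
    A * |(m : ℝ) - (n : ℝ)| - B ≤ dist ((ξ ^ m) • x) ((ξ ^ n) • x)

/-- An axis of `ξ`: a geodesic line whose image is at finite Hausdorff distance
from its `ξ`-image (equivalently, joining the two fixed points of `ξ` at
infinity). -/
def IsAxisAct {G X : Type*} [Group G] [MetricSpace X] [MulAction G X]
    (ξ : G) (τ : ℝ → X) : Prop :=
  IsGeodLine τ ∧ ∃ C : ℝ,
    (∀ t : ℝ, infDist (ξ • τ t) (range τ) ≤ C) ∧
    (∀ t : ℝ, infDist (τ t) (range fun s => ξ • τ s) ≤ C)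

/-- The orbit points `x₁ = O`, `xᵢ = ξ^{i-1}(O)` for `i > 0`, `xᵢ = ξ^{i}(O)` for
`i < 0`. -/
noncomputable def orbitPt {G X : Type*} [Group G] [MetricSpace X] [MulAction G X]
    (ξ : G) (O : X) (i : ℤ) : X :=
  if 0 < i then (ξ ^ (i - 1)) • O else (ξ ^ i) • O

/-- The Voronoi cell `Dᵢ` of the orbit point `xᵢ`. -/
noncomputable def vorCell {G X : Type*} [Group G] [MetricSpace X] [MulAction G X]
    (ξ : G) (O : X) (i : ℤ) : Set X :=
  {y : X | ∀ j : ℤ, j ≠ 0 → dist y (orbitPt ξ O i) ≤ dist y (orbitPt ξ O j)}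

/-- `jx y` is the smallest index `j ∈ ℤ*` with `y ∈ D_j`. -/
def IsIndexFun {G X : Type*} [Group G] [MetricSpace X] [MulAction G X]
    (ξ : G) (O : X) (jx : X → ℤ) : Prop :=
  ∀ y : X, jx y ≠ 0 ∧ y ∈ vorCell ξ O (jx y) ∧
    ∀ k : ℤ, k ≠ 0 → y ∈ vorCell ξ O k → jx y ≤ k

/-- The symmetric element `β₋ = ξ^{−2j−1}β` if `j = j(β) > 0`, and
`β₋ = ξ^{−2j+1}β` if `j < 0`. -/
noncomputable def symmElem {G X : Type*} [Group G] [MetricSpace X] [MulAction G X]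
    (ξ : G) (O : X) (jx : X → ℤ) (β : G) : G :=
  if 0 < jx (β • O) then ξ ^ (-2 * jx (β • O) - 1) * β
  else ξ ^ (-2 * jx (β • O) + 1) * β

/-- `D₁` or `D₋₁` separates points with indices `i` and `j`. -/
def Sep1 (i j : ℤ) : Prop :=
  (min i j < 1 ∧ 1 < max i j) ∨ (min i j < -1 ∧ -1 < max i j)

/-- The twisted product: `α⋆β = αβ₊` if `D₁` or `D₋₁` separates `α⁻¹(O)` and
`β(O)`, and `α⋆β = αβ₋` otherwise. -/
noncomputable def twProd {G X : Type*} [Group G] [MetricSpace X] [MulAction G X]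
    (ξ : G) (O : X) (jx : X → ℤ) (α β : G) : G :=
  if Sep1 (jx (α⁻¹ • O)) (jx (β • O)) then α * β else α * symmElem ξ O jx β
/-- Exponent of the orbit point with index `i`. -/
def eInd (i : ℤ) : ℤ := if 0 < i then i - 1 else i

/-- Inverse of `eInd`: index of the orbit point with exponent `n`. -/
def eInv (n : ℤ) : ℤ := if 0 ≤ n then n + 1 else n

lemma eInd_eInv (n : ℤ) : eInd (eInv n) = n := by
  unfold eInd eInv; split_ifs <;> omega

lemma eInv_ne_zero (n : ℤ) : eInv n ≠ 0 := by
  unfold eInv; split_ifs <;> omega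

lemma orbitPt_eq {G X : Type*} [Group G] [MetricSpace X] [MulAction G X]
    (ξ : G) (O : X) (i : ℤ) : orbitPt ξ O i = (ξ ^ eInd i) • O := by
  unfold orbitPt eInd; split_ifs <;> rfl

lemma cellShift {G X : Type*} [Group G] [MetricSpace X] [MulAction G X]
    (hiso : IsomAction G X) (ξ : G) (O : X) (t : ℤ) {i : ℤ} {y : X}
    (hy : y ∈ vorCell ξ O i) : (ξ ^ t) • y ∈ vorCell ξ O (eInv (eInd i + t)) := by
  simp only [vorCell, Set.mem_setOf_eq] at hy ⊢
  intro k hk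
  have h1 := hy (eInv (eInd k - t)) (eInv_ne_zero _)
  rw [orbitPt_eq, orbitPt_eq] at h1
  rw [orbitPt_eq, orbitPt_eq, eInd_eInv]
  rw [eInd_eInv] at h1
  have e1 : dist ((ξ ^ t) • y) ((ξ ^ (eInd i + t)) • O) = dist y ((ξ ^ eInd i) • O) := by
    have h := hiso (ξ ^ t) y ((ξ ^ eInd i) • O)
    rw [smul_smul, ← zpow_add, show t + eInd i = eInd i + t from add_comm _ _] at h
    exact h
  have e2 : dist ((ξ ^ t) • y) ((ξ ^ eInd k) • O) = dist y ((ξ ^ (eInd k - t)) • O) := by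
    have h := hiso (ξ ^ t) y ((ξ ^ (eInd k - t)) • O)
    rw [smul_smul, ← zpow_add, show t + (eInd k - t) = eInd k by ring] at h
    exact h
  rw [e1, e2]
  exact h1

set_option maxHeartbeats 1000000


/-- Properties of the symmetric element `β₋`: (1) `β₋(O) ∈ D_{−j−2}` if
`j = j(β) > 0` and `β₋(O) ∈ D_{−j+2}` if `j < 0`, so `β` and `β₋` have opposite
signs; (2) `β ↦ β₋` is injective on elements of a fixed sign. -/
theorem stmt14 {G X : Type*} [Group G] [MetricSpace X] [MulAction G X]
    [ProperSpace X] (δ ε L : ℝ)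
    (hδ : 0 < δ) (hε : 0 < ε) (hεδ : ε < δ)
    (hyp : FourPointHyp X δ) (hgeo : IsGeodesicSpace X)
    (hiso : IsomAction G X)
    (ξ : G) (hhyp : IsHypElem X ξ) (τ : ℝ → X) (hax : IsAxisAct ξ τ)
    (hL : L = ⨅ x : X, dist x (ξ • x)) (hL300 : 300 * δ ≤ L)
    (O : X) (hO : dist O (ξ • O) ≤ L + ε)
    (jx : X → ℤ) (hjx : IsIndexFun ξ O jx) :
    (∀ β : G,
      (0 < jx (β • O) →
        symmElem ξ O jx β • O ∈ vorCell ξ O (-(jx (β • O)) - 2) ∧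
        jx (symmElem ξ O jx β • O) < 0) ∧
      (jx (β • O) < 0 →
        symmElem ξ O jx β • O ∈ vorCell ξ O (-(jx (β • O)) + 2) ∧
        0 < jx (symmElem ξ O jx β • O))) ∧
    (∀ β β' : G, (0 < jx (β • O) ↔ 0 < jx (β' • O)) →
      symmElem ξ O jx β = symmElem ξ O jx β' → β = β') := by
  -- ### basic consequences of the hypotheses
  have hLle : ∀ x : X, L ≤ dist x (ξ • x) := by
    intro x
    rw [hL]
    exact ciInf_le ⟨0, by rintro r ⟨x', rfl⟩; exact dist_nonneg⟩ x
  have hℓL : L ≤ dist O (ξ • O) := hLle O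
  have hl0 : (0:ℝ) ≤ dist O (ξ • O) := dist_nonneg
  -- translation invariance of orbit distances
  have key : ∀ a b : ℤ, dist ((ξ ^ a) • O) ((ξ ^ b) • O) = dist O ((ξ ^ (b - a)) • O) := by
    intro a b
    have h := hiso (ξ ^ a) O ((ξ ^ (b - a)) • O)
    rw [smul_smul, ← zpow_add, show a + (b - a) = b by ring] at h
    exact h
  have hd0 : dist O ((ξ ^ (0:ℤ)) • O) = 0 := by
    rw [zpow_zero, one_smul, dist_self]
  have hdneg : ∀ k : ℤ, dist O ((ξ ^ (-k)) • O) = dist O ((ξ ^ k) • O) := by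
    intro k
    have h := key k 0
    rw [zero_sub] at h
    rw [← h, zpow_zero, one_smul, dist_comm]
  have hd1 : dist O ((ξ ^ (1:ℤ)) • O) = dist O (ξ • O) := by rw [zpow_one]
  -- Gromov product inequality from the four-point condition
  have hgr : ∀ x y z w : X,
      dist x w + dist y w - dist x y ≤ dist x w + dist z w - dist x z + 2 * δ ∨
      dist y w + dist z w - dist y z ≤ dist x w + dist z w - dist x z + 2 * δ := by
    intro x y z w
    have h := hyp x z y w
    rcases max_cases (dist x y + dist z w) (dist z y + dist x w) with ⟨he, _⟩ | ⟨he, _⟩ <;>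
      rw [he] at h
    · left; linarith
    · right; linarith [dist_comm y z]
  -- the displacement of ξ² is almost 2ℓ
  have hstep2 : 2 * dist O (ξ • O) - 5 * δ ≤ dist O ((ξ ^ (2:ℤ)) • O) := by
    obtain ⟨s, f, hf0, hf1, hfi, -⟩ := hgeo O (ξ • O)
    have hOm : dist O (f (dist O (ξ • O) / 2)) = dist O (ξ • O) / 2 := by
      have h := hfi 0 ⟨le_refl 0, hl0⟩ (dist O (ξ • O) / 2) ⟨by linarith, by linarith⟩
      rw [hf0] at h
      rw [h, zero_sub, abs_neg, abs_of_nonneg (by linarith)]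
    have hmw : dist (f (dist O (ξ • O) / 2)) (ξ • O) = dist O (ξ • O) / 2 := by
      have h := hfi (dist O (ξ • O) / 2) ⟨by linarith, by linarith⟩ (dist O (ξ • O))
        ⟨hl0, le_refl _⟩
      rw [hf1] at h
      rw [h, abs_of_nonpos (by linarith)]
      ring
    set m := f (dist O (ξ • O) / 2) with hmdef
    have hz2 : (ξ ^ (2:ℤ)) • O = ξ • (ξ • O) := by
      rw [show (2:ℤ) = 1 + 1 by norm_num, zpow_add, zpow_one, mul_smul]
    have f1 : dist ((ξ ^ (2:ℤ)) • O) (ξ • O) = dist O (ξ • O) := by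
      rw [hz2, hiso ξ (ξ • O) O, dist_comm]
    have f2 : dist ((ξ ^ (2:ℤ)) • O) (ξ • m) = dist m (ξ • O) := by
      rw [hz2, hiso ξ (ξ • O) m, dist_comm]
    have f3 : dist (ξ • m) (ξ • O) = dist m O := hiso ξ m O
    have f4 : L ≤ dist m (ξ • m) := hLle m
    have f5 : dist m O = dist O m := dist_comm _ _
    have c1 : 3 * dist O (ξ • O) / 2 - 3 * δ ≤ dist m ((ξ ^ (2:ℤ)) • O) := by
      rcases hgr m ((ξ ^ (2:ℤ)) • O) (ξ • m) (ξ • O) with g | g <;>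
        linarith [f1, f2, f3, f4, f5, hOm, hmw, dist_comm m ((ξ ^ (2:ℤ)) • O),
          hδ, hL300, hℓL, hO, hεδ]
    rcases hgr m O ((ξ ^ (2:ℤ)) • O) (ξ • O) with g | g <;>
      linarith [f1, f2, f3, f4, f5, hOm, hmw, c1, dist_comm m ((ξ ^ (2:ℤ)) • O),
        hδ, hL300, hℓL, hO, hεδ]
  -- ladder: each extra power of ξ adds at least ℓ - 7δ to the displacement
  have hladder : ∀ k : ℕ, dist O ((ξ ^ (k:ℤ)) • O) + (dist O (ξ • O) - 7 * δ) ≤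
      dist O ((ξ ^ ((k:ℤ) + 1)) • O) := by
    intro k
    induction k with
    | zero =>
      simp only [Nat.cast_zero]
      rw [show (0:ℤ) + 1 = 1 by norm_num]
      linarith [hd0, hd1, hδ]
    | succ k ih =>
      push_cast
      rw [show (k:ℤ) + 1 + 1 = (k:ℤ) + 2 by ring]
      have e1 : dist ((ξ ^ (k:ℤ)) • O) ((ξ ^ ((k:ℤ) + 1)) • O) = dist O (ξ • O) := by
        rw [key, show (k:ℤ) + 1 - k = 1 by ring, zpow_one]
      have e2 : dist ((ξ ^ ((k:ℤ) + 2)) • O) ((ξ ^ ((k:ℤ) + 1)) • O) = dist O (ξ • O) := by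
        rw [key, show (k:ℤ) + 1 - ((k:ℤ) + 2) = -1 by ring, hdneg, zpow_one]
      have e3 : dist ((ξ ^ (k:ℤ)) • O) O = dist O ((ξ ^ (k:ℤ)) • O) := dist_comm _ _
      have e4 : dist ((ξ ^ (k:ℤ)) • O) ((ξ ^ ((k:ℤ) + 2)) • O) = dist O ((ξ ^ (2:ℤ)) • O) := by
        rw [key, show (k:ℤ) + 2 - k = 2 by ring]
      rcases hgr ((ξ ^ (k:ℤ)) • O) O ((ξ ^ ((k:ℤ) + 2)) • O) ((ξ ^ ((k:ℤ) + 1)) • O)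
        with g | g <;>
        linarith [e1, e2, e3, e4, hstep2, ih, hδ, hL300, hℓL,
          dist_comm O ((ξ ^ ((k:ℤ) + 1)) • O),
          dist_comm ((ξ ^ ((k:ℤ) + 2)) • O) ((ξ ^ ((k:ℤ) + 1)) • O)]
  have hladderZ : ∀ k : ℤ, 1 ≤ k →
      dist O ((ξ ^ (k - 1)) • O) + (dist O (ξ • O) - 7 * δ) ≤ dist O ((ξ ^ k) • O) := by
    intro k hk
    have h := hladder (k - 1).toNat
    rwa [Int.toNat_of_nonneg (by omega), show k - 1 + 1 = k by ring] at h
  have hposZ : ∀ k : ℤ, 1 ≤ k → dist O (ξ • O) - 7 * δ ≤ dist O ((ξ ^ k) • O) := by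
    intro k hk
    have h := hladderZ k hk
    have h0 : (0:ℝ) ≤ dist O ((ξ ^ (k - 1)) • O) := dist_nonneg
    linarith
  -- opposite powers are almost aligned through O
  have hopp : ∀ a b : ℤ, 1 ≤ a → 1 ≤ b →
      dist O ((ξ ^ a) • O) + dist O ((ξ ^ b) • O) - 9 * δ ≤
        dist ((ξ ^ a) • O) ((ξ ^ (-b)) • O) := by
    intro a b ha hb
    have f1 : dist ((ξ ^ (-1:ℤ)) • O) ((ξ ^ (1:ℤ)) • O) = dist O ((ξ ^ (2:ℤ)) • O) := by
      rw [key, show (1:ℤ) - -1 = 2 by ring]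
    have f2 : dist O ((ξ ^ (-1:ℤ)) • O) = dist O (ξ • O) := by
      rw [show (-1:ℤ) = -(1:ℤ) by ring, hdneg, zpow_one]
    have f5 : dist ((ξ ^ (-1:ℤ)) • O) ((ξ ^ (-b)) • O) = dist O ((ξ ^ (b - 1)) • O) := by
      rw [key, show -b - -1 = -(b - 1) by ring, hdneg]
    have f6 : dist ((ξ ^ (-b)) • O) ((ξ ^ (1:ℤ)) • O) = dist O ((ξ ^ (b + 1)) • O) := by
      rw [key, show (1:ℤ) - -b = b + 1 by ring]
    have c : dist O ((ξ ^ (-b)) • O) + dist O (ξ • O) - dist O ((ξ ^ (b + 1)) • O) ≤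
        7 * δ := by
      rcases hgr ((ξ ^ (-1:ℤ)) • O) ((ξ ^ (-b)) • O) ((ξ ^ (1:ℤ)) • O) O with g | g <;>
        linarith [f1, f2, f5, f6, hstep2, hladderZ b hb, hdneg b, hδ, hL300, hℓL, hd1,
          dist_comm ((ξ ^ (-1:ℤ)) • O) O, dist_comm ((ξ ^ (-b)) • O) O,
          dist_comm ((ξ ^ (1:ℤ)) • O) O]
    have f7 : dist ((ξ ^ (1:ℤ)) • O) ((ξ ^ a) • O) = dist O ((ξ ^ (a - 1)) • O) := by
      rw [key]
    have f8 : dist ((ξ ^ (1:ℤ)) • O) ((ξ ^ (-b)) • O) = dist O ((ξ ^ (b + 1)) • O) := by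
      rw [key, show -b - 1 = -(b + 1) by ring, hdneg]
    rcases hgr ((ξ ^ (1:ℤ)) • O) ((ξ ^ a) • O) ((ξ ^ (-b)) • O) O with g | g <;>
      linarith [f7, f8, c, hladderZ a ha, hdneg b, hδ, hL300, hℓL, hd1,
        dist_comm ((ξ ^ (1:ℤ)) • O) O, dist_comm ((ξ ^ a) • O) O,
        dist_comm ((ξ ^ (-b)) • O) O]
  -- separation: a positive cell (index ≥ 2) and a negative cell are disjoint
  have hsep : ∀ n m : ℤ, 2 ≤ n → m ≤ -1 → ∀ y : X,
      y ∈ vorCell ξ O n → y ∈ vorCell ξ O m → False := by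
    intro n m hn hm y hyn hym
    have hxn : orbitPt ξ O n = (ξ ^ (n - 1)) • O := by
      unfold orbitPt; rw [if_pos (by omega : (0:ℤ) < n)]
    have hxm : orbitPt ξ O m = (ξ ^ m) • O := by
      unfold orbitPt; rw [if_neg (by omega : ¬ (0:ℤ) < m)]
    have hx1 : orbitPt ξ O 1 = O := by
      unfold orbitPt
      rw [if_pos (by norm_num : (0:ℤ) < 1)]
      norm_num
    have h1 := hyn 1 one_ne_zero
    rw [hxn, hx1] at h1
    have h2 := hym 1 one_ne_zero
    rw [hxm, hx1] at h2
    have hda := hopp (n - 1) (-m) (by omega) (by omega)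
    rw [neg_neg] at hda
    have hfp := hyp ((ξ ^ (n - 1)) • O) ((ξ ^ m) • O) y O
    have e1 : dist ((ξ ^ (n - 1)) • O) O = dist O ((ξ ^ (n - 1)) • O) := dist_comm _ _
    have e2 : dist ((ξ ^ m) • O) O = dist O ((ξ ^ m) • O) := dist_comm _ _
    have e3 : dist O ((ξ ^ (-m)) • O) = dist O ((ξ ^ m) • O) := hdneg m
    have e4 : dist ((ξ ^ (n - 1)) • O) y = dist y ((ξ ^ (n - 1)) • O) := dist_comm _ _
    have e5 : dist ((ξ ^ m) • O) y = dist y ((ξ ^ m) • O) := dist_comm _ _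
    have p1 := hposZ (n - 1) (by omega)
    have p2 := hposZ (-m) (by omega)
    rcases max_cases (dist ((ξ ^ (n - 1)) • O) y + dist ((ξ ^ m) • O) O)
        (dist ((ξ ^ m) • O) y + dist ((ξ ^ (n - 1)) • O) O) with ⟨he, -⟩ | ⟨he, -⟩ <;>
      rw [he] at hfp <;>
      linarith [h1, h2, hda, e1, e2, e3, e4, e5, p1, p2, hδ, hL300, hℓL]
  constructor
  · -- part (1)
    intro β
    constructor
    · intro hj
      have hmem := (hjx (β • O)).2.1
      have hsym : symmElem ξ O jx β = ξ ^ (-2 * jx (β • O) - 1) * β := by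
        unfold symmElem; rw [if_pos hj]
      have hsmul : symmElem ξ O jx β • O = (ξ ^ (-2 * jx (β • O) - 1)) • (β • O) := by
        rw [hsym, mul_smul]
      have hshift := cellShift hiso ξ O (-2 * jx (β • O) - 1) hmem
      have hidx : eInv (eInd (jx (β • O)) + (-2 * jx (β • O) - 1)) = -jx (β • O) - 2 := by
        simp only [eInd, eInv]; split_ifs <;> omega
      rw [hidx] at hshift
      rw [← hsmul] at hshift
      refine ⟨hshift, ?_⟩
      have hmin := (hjx (symmElem ξ O jx β • O)).2.2 (-jx (β • O) - 2) (by omega) hshift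
      omega
    · intro hj
      have hmem := (hjx (β • O)).2.1
      have hsym : symmElem ξ O jx β = ξ ^ (-2 * jx (β • O) + 1) * β := by
        unfold symmElem; rw [if_neg (by omega : ¬ 0 < jx (β • O))]
      have hsmul : symmElem ξ O jx β • O = (ξ ^ (-2 * jx (β • O) + 1)) • (β • O) := by
        rw [hsym, mul_smul]
      have hshift := cellShift hiso ξ O (-2 * jx (β • O) + 1) hmem
      have hidx : eInv (eInd (jx (β • O)) + (-2 * jx (β • O) + 1)) = -jx (β • O) + 2 := by
        simp only [eInd, eInv]; split_ifs <;> omega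
      rw [hidx] at hshift
      rw [← hsmul] at hshift
      refine ⟨hshift, ?_⟩
      have hne2 := (hjx (symmElem ξ O jx β • O)).1
      by_contra hpos
      exact hsep (-jx (β • O) + 2) (jx (symmElem ξ O jx β • O)) (by omega) (by omega) _
        hshift (hjx (symmElem ξ O jx β • O)).2.1
  · -- part (2): injectivity on elements of a fixed sign
    intro β β' hsgn heq
    have hne := (hjx (β • O)).1
    have hne' := (hjx (β' • O)).1
    by_cases hp : 0 < jx (β • O)
    · have hp' := hsgn.mp hp
      unfold symmElem at heq
      rw [if_pos hp, if_pos hp'] at heq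
      have hb : β' = ξ ^ (2 * jx (β' • O) - 2 * jx (β • O)) * β := by
        have h1 : (ξ ^ (-2 * jx (β' • O) - 1))⁻¹ * (ξ ^ (-2 * jx (β • O) - 1) * β) = β' := by
          rw [heq, inv_mul_cancel_left]
        have h2 : (ξ ^ (-2 * jx (β' • O) - 1))⁻¹ * (ξ ^ (-2 * jx (β • O) - 1) * β) =
            ξ ^ (2 * jx (β' • O) - 2 * jx (β • O)) * β := by
          rw [← zpow_neg, ← mul_assoc, ← zpow_add,
            show -(-2 * jx (β' • O) - 1) + (-2 * jx (β • O) - 1) =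
              2 * jx (β' • O) - 2 * jx (β • O) by ring]
        rw [← h2]
        exact h1.symm
      have hb2 : β = ξ ^ (2 * jx (β • O) - 2 * jx (β' • O)) * β' := by
        have h1 : (ξ ^ (-2 * jx (β • O) - 1))⁻¹ * (ξ ^ (-2 * jx (β' • O) - 1) * β') = β := by
          rw [← heq, inv_mul_cancel_left]
        have h2 : (ξ ^ (-2 * jx (β • O) - 1))⁻¹ * (ξ ^ (-2 * jx (β' • O) - 1) * β') =
            ξ ^ (2 * jx (β • O) - 2 * jx (β' • O)) * β' := by
          rw [← zpow_neg, ← mul_assoc, ← zpow_add,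
            show -(-2 * jx (β • O) - 1) + (-2 * jx (β' • O) - 1) =
              2 * jx (β • O) - 2 * jx (β' • O) by ring]
        rw [← h2]
        exact h1.symm
      have m1 : β' • O ∈ vorCell ξ O
          (eInv (eInd (jx (β • O)) + (2 * jx (β' • O) - 2 * jx (β • O)))) := by
        have h := cellShift hiso ξ O (2 * jx (β' • O) - 2 * jx (β • O)) (hjx (β • O)).2.1
        rw [← mul_smul, ← hb] at h
        exact h
      have i1 := (hjx (β' • O)).2.2 _ (eInv_ne_zero _) m1
      have m2 : β • O ∈ vorCell ξ O
          (eInv (eInd (jx (β' • O)) + (2 * jx (β • O) - 2 * jx (β' • O)))) := by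
        have h := cellShift hiso ξ O (2 * jx (β • O) - 2 * jx (β' • O)) (hjx (β' • O)).2.1
        rw [← mul_smul, ← hb2] at h
        exact h
      have i2 := (hjx (β • O)).2.2 _ (eInv_ne_zero _) m2
      have hjj : jx (β • O) = jx (β' • O) := by
        simp only [eInd, eInv] at i1 i2
        split_ifs at i1 i2 <;> omega
      rw [hjj] at heq
      exact mul_left_cancel heq
    · have hp' : ¬ 0 < jx (β' • O) := fun h => hp (hsgn.mpr h)
      unfold symmElem at heq
      rw [if_neg hp, if_neg hp'] at heq
      have hb : β' = ξ ^ (2 * jx (β' • O) - 2 * jx (β • O)) * β := by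
        have h1 : (ξ ^ (-2 * jx (β' • O) + 1))⁻¹ * (ξ ^ (-2 * jx (β • O) + 1) * β) = β' := by
          rw [heq, inv_mul_cancel_left]
        have h2 : (ξ ^ (-2 * jx (β' • O) + 1))⁻¹ * (ξ ^ (-2 * jx (β • O) + 1) * β) =
            ξ ^ (2 * jx (β' • O) - 2 * jx (β • O)) * β := by
          rw [← zpow_neg, ← mul_assoc, ← zpow_add,
            show -(-2 * jx (β' • O) + 1) + (-2 * jx (β • O) + 1) =
              2 * jx (β' • O) - 2 * jx (β • O) by ring]
        rw [← h2]
        exact h1.symm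
      have hb2 : β = ξ ^ (2 * jx (β • O) - 2 * jx (β' • O)) * β' := by
        have h1 : (ξ ^ (-2 * jx (β • O) + 1))⁻¹ * (ξ ^ (-2 * jx (β' • O) + 1) * β') = β := by
          rw [← heq, inv_mul_cancel_left]
        have h2 : (ξ ^ (-2 * jx (β • O) + 1))⁻¹ * (ξ ^ (-2 * jx (β' • O) + 1) * β') =
            ξ ^ (2 * jx (β • O) - 2 * jx (β' • O)) * β' := by
          rw [← zpow_neg, ← mul_assoc, ← zpow_add,
            show -(-2 * jx (β • O) + 1) + (-2 * jx (β' • O) + 1) =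
              2 * jx (β • O) - 2 * jx (β' • O) by ring]
        rw [← h2]
        exact h1.symm
      have m1 : β' • O ∈ vorCell ξ O
          (eInv (eInd (jx (β • O)) + (2 * jx (β' • O) - 2 * jx (β • O)))) := by
        have h := cellShift hiso ξ O (2 * jx (β' • O) - 2 * jx (β • O)) (hjx (β • O)).2.1
        rw [← mul_smul, ← hb] at h
        exact h
      have i1 := (hjx (β' • O)).2.2 _ (eInv_ne_zero _) m1
      have m2 : β • O ∈ vorCell ξ O
          (eInv (eInd (jx (β' • O)) + (2 * jx (β • O) - 2 * jx (β' • O)))) := by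
        have h := cellShift hiso ξ O (2 * jx (β • O) - 2 * jx (β' • O)) (hjx (β' • O)).2.1
        rw [← mul_smul, ← hb2] at h
        exact h
      have i2 := (hjx (β • O)).2.2 _ (eInv_ne_zero _) m2
      have hjj : jx (β • O) = jx (β' • O) := by
        simp only [eInd, eInv] at i1 i2
        split_ifs at i1 i2 <;> omega
      rw [hjj] at heq
      exact mul_left_cancel heq
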